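/- arXiv:2312.01287 — 2 statements merged into one kernel-verified Lean document; each statement's English description precedes it below -/
import Mathlib

section
/- Let ξ ∈ ℂ^p and η ∈ ℂ^q with η*η < ξ*ξ, γ = ξ*ξ - η*η. Set A = I_p - ξξ*/γ, B = -ξη*/γ, D = -I_q - ηη*/γ. Then A - B D^{-1} B* = I_p - ξξ*/(ξ*ξ). -/
open Matrix ComplexOrder

theorem stmt5 {p q : ℕ} (ξ : Matrix (Fin p) (Fin 1) ℂ) (η : Matrix (Fin q) (Fin 1) ℂ)
    (h : (ηᴴ * η) 0 0 < (ξᴴ * ξ) 0 0)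
    (γ : ℂ) (hγ : γ = (ξᴴ * ξ) 0 0 - (ηᴴ * η) 0 0)
    (A : Matrix (Fin p) (Fin p) ℂ) (hA : A = 1 - γ⁻¹ • (ξ * ξᴴ))
    (B : Matrix (Fin p) (Fin q) ℂ) (hB : B = -(γ⁻¹ • (ξ * ηᴴ)))
    (D : Matrix (Fin q) (Fin q) ℂ) (hD : D = -1 - γ⁻¹ • (η * ηᴴ)) :
    A - B * D⁻¹ * Bᴴ = 1 - ((ξᴴ * ξ) 0 0)⁻¹ • (ξ * ξᴴ) := by
  set s : ℂ := (ηᴴ * η) 0 0 with hs_def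
  set t : ℂ := (ξᴴ * ξ) 0 0 with ht_def
  have hs : ηᴴ * η = s • (1 : Matrix (Fin 1) (Fin 1) ℂ) := by
    ext i j; fin_cases i; fin_cases j; simp [hs_def]
  have ht : ξᴴ * ξ = t • (1 : Matrix (Fin 1) (Fin 1) ℂ) := by
    ext i j; fin_cases i; fin_cases j; simp [ht_def]
  have hs0 : (0 : ℂ) ≤ s := by
    simp only [hs_def, Matrix.mul_apply, Matrix.conjTranspose_apply]
    exact Finset.sum_nonneg fun i _ => star_mul_self_nonneg _
  have ht0 : (0 : ℂ) < t := lt_of_le_of_lt hs0 h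
  have htne : t ≠ 0 := ne_of_gt ht0
  have hγne : γ ≠ 0 := by
    rw [hγ]; exact sub_ne_zero.mpr h.ne'
  have hsim : s.im = 0 := ((Complex.le_def).mp hs0).2.symm
  have htim : t.im = 0 := by
    have := ((Complex.le_def).mp (le_of_lt ht0)).2; simpa using this.symm
  have hγstar : star γ = γ := by
    rw [hγ]
    simp [Complex.ext_iff, Complex.conj_re, Complex.conj_im, hsim, htim]
  -- N*N = s • N
  have hNN : (η * ηᴴ) * (η * ηᴴ) = s • (η * ηᴴ) := by
    calc (η * ηᴴ) * (η * ηᴴ) = η * (ηᴴ * η) * ηᴴ := by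
          rw [Matrix.mul_assoc, Matrix.mul_assoc, Matrix.mul_assoc]
      _ = s • (η * ηᴴ) := by rw [hs]; simp [Matrix.mul_smul, Matrix.smul_mul, Matrix.mul_assoc]
  have hKK : (ξ * ηᴴ) * (η * ξᴴ) = s • (ξ * ξᴴ) := by
    calc (ξ * ηᴴ) * (η * ξᴴ) = ξ * (ηᴴ * η) * ξᴴ := by
          rw [Matrix.mul_assoc, Matrix.mul_assoc, Matrix.mul_assoc]
      _ = s • (ξ * ξᴴ) := by rw [hs]; simp [Matrix.mul_smul, Matrix.smul_mul, Matrix.mul_assoc]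
  have hKN : (ξ * ηᴴ) * (η * ηᴴ) = s • (ξ * ηᴴ) := by
    calc (ξ * ηᴴ) * (η * ηᴴ) = ξ * (ηᴴ * η) * ηᴴ := by
          rw [Matrix.mul_assoc, Matrix.mul_assoc, Matrix.mul_assoc]
      _ = s • (ξ * ηᴴ) := by rw [hs]; simp [Matrix.mul_smul, Matrix.smul_mul, Matrix.mul_assoc]
  -- D⁻¹
  have hkey : γ⁻¹ - t⁻¹ - γ⁻¹ * s * t⁻¹ = 0 := by
    field_simp
    linear_combination -hγ
  have hDinv : D⁻¹ = -(1 - t⁻¹ • (η * ηᴴ)) := by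
    apply Matrix.inv_eq_right_inv
    rw [hD]
    have expand : (-1 - γ⁻¹ • (η * ηᴴ)) * -(1 - t⁻¹ • (η * ηᴴ))
        = 1 + (γ⁻¹ - t⁻¹ - γ⁻¹ * s * t⁻¹) • (η * ηᴴ) := by
      simp only [Matrix.mul_neg, Matrix.neg_mul, Matrix.sub_mul, Matrix.mul_sub,
        Matrix.smul_mul, Matrix.mul_smul, Matrix.one_mul, Matrix.mul_one, hNN,
        smul_smul, neg_sub, neg_neg]
      module
    rw [expand, hkey]; simp
  -- Bᴴ
  have hBH : Bᴴ = -(γ⁻¹ • (η * ξᴴ)) := by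
    rw [hB]
    simp [Matrix.conjTranspose_smul, Matrix.conjTranspose_mul, star_inv₀, hγstar]
  -- the product
  have hprod : B * D⁻¹ * Bᴴ = -((γ⁻¹ * γ⁻¹ * (s - t⁻¹ * (s * s))) • (ξ * ξᴴ)) := by
    rw [hBH, hB, hDinv]
    simp only [Matrix.mul_neg, Matrix.neg_mul, neg_neg, Matrix.sub_mul, Matrix.mul_sub,
      Matrix.smul_mul, Matrix.mul_smul, Matrix.one_mul, Matrix.mul_one, hKK, hKN,
      smul_smul, Matrix.mul_assoc]
    module
  have hcoef : γ⁻¹ - γ⁻¹ * γ⁻¹ * (s - t⁻¹ * (s * s)) = t⁻¹ := by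
    rw [hγ]
    have : t - s ≠ 0 := sub_ne_zero.mpr h.ne'
    field_simp
  rw [hA, hprod]
  rw [sub_neg_eq_add]
  rw [sub_add, ← sub_smul, hcoef]
end

section
/- Let ξ ∈ ℂ^p, η ∈ ℂ^q with η*η < ξ*ξ, γ = ξ*ξ - η*η, c = (ξ; η) ∈ ℂ^{p+q}, J_{p,q} = diag(I_p, -I_q). Let U = [U1 U2; U3 U4] be a p×p unitary with last column ξ/√(ξ*ξ), V the first p-1 columns. Define the (p+q)×(p-1+q) matrix α = [V, (ξη*/γ)(I_q + ηη*/γ)^{-1/2}; 0, (I_q + ηη*/γ)^{1/2}]. Then J_{p,q} - cc*/γ = α J_{p-1,q} α*, where J_{p-1,q} = diag(I_{p-1}, -I_q). -/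
open Matrix ComplexOrder

/-- The positive semidefinite square root of a positive semidefinite matrix
(the definition `Matrix.PosSemidef.sqrt` of the older Mathlib, since removed). -/
noncomputable def Matrix.PosSemidef.sqrt {n : Type*} [Fintype n] [DecidableEq n] {A : Matrix n n ℂ}
    (hA : A.PosSemidef) : Matrix n n ℂ :=
  hA.1.eigenvectorUnitary.1 * diagonal ((↑) ∘ (√·) ∘ hA.1.eigenvalues) *
    (star hA.1.eigenvectorUnitary : Matrix n n ℂ)

theorem stmt7 {n q : ℕ} (ξ : Matrix (Fin (n + 1)) (Fin 1) ℂ) (η : Matrix (Fin q) (Fin 1) ℂ)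
    (γ : ℝ) (hγpos : 0 < γ) (hγ : (γ : ℂ) = (ξᴴ * ξ) 0 0 - (ηᴴ * η) 0 0)
    (U : Matrix (Fin (n + 1)) (Fin (n + 1)) ℂ) (hU : Uᴴ * U = 1)
    (hlast : ∀ i, U i (Fin.last n) = ξ i 0 / (Real.sqrt (((ξᴴ * ξ) 0 0).re) : ℂ))
    (V : Matrix (Fin (n + 1)) (Fin n) ℂ) (hV : ∀ i j, V i j = U i j.castSucc)
    (M : Matrix (Fin q) (Fin q) ℂ) (hMdef : M = 1 + (γ : ℂ)⁻¹ • (η * ηᴴ))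
    (hM : M.PosSemidef)
    (α : Matrix (Fin (n + 1) ⊕ Fin q) (Fin n ⊕ Fin q) ℂ)
    (hα : α = fromBlocks V ((γ : ℂ)⁻¹ • (ξ * ηᴴ) * (hM.sqrt)⁻¹) 0 hM.sqrt)
    (c : Matrix (Fin (n + 1) ⊕ Fin q) (Fin 1) ℂ)
    (hc : c = Matrix.of fun i (_ : Fin 1) => Sum.elim (fun i => ξ i 0) (fun j => η j 0) i) :
    fromBlocks (1 : Matrix (Fin (n + 1)) (Fin (n + 1)) ℂ) 0 0 (-(1 : Matrix (Fin q) (Fin q) ℂ))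
        - (γ : ℂ)⁻¹ • (c * cᴴ)
      = α * fromBlocks (1 : Matrix (Fin n) (Fin n) ℂ) 0 0 (-(1 : Matrix (Fin q) (Fin q) ℂ)) * αᴴ := by
  -- notation
  set s2 : ℂ := (ξᴴ * ξ) 0 0 with hs2def
  set t : ℂ := (ηᴴ * η) 0 0 with htdef
  have hγ0 : (γ : ℂ) ≠ 0 := by exact_mod_cast hγpos.ne'
  -- t is nonneg real
  have ht : 0 ≤ t := by
    rw [htdef, mul_apply]
    exact Finset.sum_nonneg fun j _ => by
      simpa [conjTranspose_apply] using star_mul_self_nonneg (η j 0)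
  have htim : t.im = 0 := ((Complex.nonneg_iff).mp ht).2.symm
  have htre : 0 ≤ t.re := ((Complex.nonneg_iff).mp ht).1
  have hs2 : s2 = (γ : ℂ) + t := by rw [hγ]; ring
  have hs2re : s2.re = γ + t.re := by rw [hs2]; simp
  have hs2im : s2.im = 0 := by rw [hs2]; simp [htim]
  have hs2repos : 0 < s2.re := by rw [hs2re]; positivity
  have hs20 : s2 ≠ 0 := fun h => by simp [h] at hs2repos
  have hs2c : (s2.re : ℂ) = s2 := Complex.ext (by simp) (by simp [hs2im])
  -- the square root scalar
  have hss : ((Real.sqrt s2.re : ℝ) : ℂ) * ((Real.sqrt s2.re : ℝ) : ℂ) = s2 := by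
    rw [← Complex.ofReal_mul, Real.mul_self_sqrt hs2repos.le, hs2c]
  -- V * Vᴴ
  have hU' : U * Uᴴ = 1 := mul_eq_one_comm.mp hU
  have hVV : V * Vᴴ = 1 - s2⁻¹ • (ξ * ξᴴ) := by
    ext i k
    have h1 : (U * Uᴴ) i k = (1 : Matrix (Fin (n+1)) (Fin (n+1)) ℂ) i k := by rw [hU']
    rw [mul_apply, Fin.sum_univ_castSucc] at h1
    have hlast2 : U i (Fin.last n) * star (U k (Fin.last n))
        = s2⁻¹ * (ξ i 0 * star (ξ k 0)) := by
      have hsne : ((Real.sqrt s2.re : ℝ) : ℂ) ≠ 0 :=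
        Complex.ofReal_ne_zero.mpr (Real.sqrt_pos.mpr hs2repos).ne'
      rw [hlast, hlast, star_div₀, Complex.star_def,
        Complex.conj_ofReal, ← hss]
      simp only [hss]; rw [div_mul_div_comm, hss]; ring
    rw [mul_apply]
    rw [Matrix.sub_apply, Matrix.smul_apply, mul_apply, Fin.sum_univ_one, smul_eq_mul]
    have h2 : ∑ j : Fin n, V i j * Vᴴ j k
        = ∑ j : Fin n, U i j.castSucc * Uᴴ j.castSucc k := by
      refine Finset.sum_congr rfl fun j _ => ?_
      rw [conjTranspose_apply, conjTranspose_apply, hV, hV]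
    rw [h2, conjTranspose_apply]
    rw [conjTranspose_apply, hlast2] at h1
    linear_combination h1
  -- square root of M
  set S := hM.sqrt with hSdef
  have hSH : Sᴴ = S := by
    rw [hSdef, Matrix.PosSemidef.sqrt, conjTranspose_mul, conjTranspose_mul, diagonal_conjTranspose,
      ← Matrix.star_eq_conjTranspose, ← Matrix.star_eq_conjTranspose, star_star, Matrix.mul_assoc]
    congr 3
    ext i
    simp
  have hSS : S * S = M := by
    have hU := hM.1.eigenvectorUnitary.2
    rw [Matrix.mem_unitaryGroup_iff'] at hU
    conv_rhs => rw [hM.1.spectral_theorem]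
    rw [hSdef, Matrix.PosSemidef.sqrt, Unitary.conjStarAlgAut_apply]
    simp only [Matrix.mul_assoc]
    rw [← Matrix.mul_assoc (star _) _ (diagonal _ * _), hU, Matrix.one_mul, ← Matrix.mul_assoc (diagonal _), diagonal_mul_diagonal]
    congr 3
    ext i
    simp only [Function.comp_apply]
    rw [← Complex.ofReal_mul, Real.mul_self_sqrt (hM.eigenvalues_nonneg i)]
    rfl
  have hMpd : M.PosDef := by
    rw [hMdef]
    refine Matrix.PosDef.add_posSemidef Matrix.PosDef.one ?_
    have h3 : (γ:ℂ)⁻¹ • (η * ηᴴ)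
        = (((Real.sqrt γ⁻¹ : ℝ) : ℂ) • η) * (((Real.sqrt γ⁻¹ : ℝ) : ℂ) • η)ᴴ := by
      rw [conjTranspose_smul, Matrix.smul_mul, Matrix.mul_smul, smul_smul]
      congr 1
      rw [Complex.star_def, Complex.conj_ofReal, ← Complex.ofReal_mul,
        Real.mul_self_sqrt (inv_nonneg.mpr hγpos.le), Complex.ofReal_inv]
    rw [h3]
    exact posSemidef_self_mul_conjTranspose _
  have hMunit : IsUnit M.det := (Matrix.isUnit_iff_isUnit_det _).mp hMpd.isUnit
  have hSunit : IsUnit S.det := by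
    have h4 : S.det * S.det = M.det := by rw [← det_mul, hSS]
    exact isUnit_of_mul_isUnit_left (h4 ▸ hMunit)
  have hSiS : S⁻¹ * S = 1 := nonsing_inv_mul S hSunit
  have hSSi : S * S⁻¹ = 1 := mul_nonsing_inv S hSunit
  have hSiH : (S⁻¹)ᴴ = S⁻¹ := by rw [conjTranspose_nonsing_inv, hSH]
  have hSiSi : S⁻¹ * S⁻¹ = M⁻¹ := by rw [← Matrix.mul_inv_rev, hSS]
  -- η quadratic facts
  have hηt : ηᴴ * η = t • (1 : Matrix (Fin 1) (Fin 1) ℂ) := by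
    ext i j
    have hi : i = 0 := Subsingleton.elim _ _
    have hj : j = 0 := Subsingleton.elim _ _
    subst hi; subst hj
    simp [htdef]
  have hMη : M * η = (s2 / (γ:ℂ)) • η := by
    rw [hMdef, Matrix.add_mul, Matrix.one_mul, Matrix.smul_mul, Matrix.mul_assoc, hηt,
      Matrix.mul_smul, Matrix.mul_one, smul_smul, hs2]
    nth_rewrite 1 [← one_smul ℂ η]
    rw [← add_smul]
    congr 1
    field_simp
  have hMiη : M⁻¹ * η = ((γ:ℂ) / s2) • η := by
    have h := congrArg (fun X => M⁻¹ * X) hMη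
    simp only [Matrix.mul_smul] at h
    rw [← Matrix.mul_assoc, nonsing_inv_mul M hMunit, Matrix.one_mul] at h
    have h2 : ((γ:ℂ)/s2) • η = (((γ:ℂ)/s2) * (s2/(γ:ℂ))) • (M⁻¹ * η) := by
      rw [← smul_smul, ← h]
    have h3 : ((γ:ℂ)/s2) * (s2/(γ:ℂ)) = 1 := by field_simp
    rw [h2, h3, one_smul]
  -- c * cᴴ as blocks
  have hcb : c * cᴴ = fromBlocks (ξ * ξᴴ) (ξ * ηᴴ) (η * ξᴴ) (η * ηᴴ) := by
    have hcr : c = fromRows ξ η := by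
      rw [hc]; ext i j
      have hj : j = 0 := Subsingleton.elim _ _
      subst hj
      cases i <;> rfl
    rw [hcr, conjTranspose_fromRows_eq_fromCols_conjTranspose, fromRows_mul_fromCols]
  -- the B block
  set B := (γ:ℂ)⁻¹ • (ξ * ηᴴ) * S⁻¹ with hBdef
  have hstarγ : star ((γ:ℂ)⁻¹) = (γ:ℂ)⁻¹ := by
    simp [Complex.star_def, map_inv₀, Complex.conj_ofReal]
  have hBH : Bᴴ = S⁻¹ * ((γ:ℂ)⁻¹ • (η * ξᴴ)) := by
    rw [hBdef, conjTranspose_mul, hSiH, conjTranspose_smul, conjTranspose_mul,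
      conjTranspose_conjTranspose, hstarγ]
  have hBB : B * Bᴴ = (t / ((γ:ℂ) * s2)) • (ξ * ξᴴ) := by
    rw [hBH, hBdef]
    simp only [Matrix.smul_mul, Matrix.mul_smul, smul_smul, Matrix.mul_assoc]
    rw [← Matrix.mul_assoc S⁻¹ S⁻¹, hSiSi, ← Matrix.mul_assoc M⁻¹ η, hMiη,
      Matrix.smul_mul, Matrix.mul_smul, Matrix.mul_smul, smul_smul,
      ← Matrix.mul_assoc ηᴴ η, hηt, Matrix.smul_mul, Matrix.one_mul,
      Matrix.mul_smul, smul_smul]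
    congr 1
    field_simp
  -- assemble
  rw [hcb, hα, Matrix.fromBlocks_smul, sub_eq_add_neg,
    Matrix.fromBlocks_neg, Matrix.fromBlocks_add, fromBlocks_conjTranspose,
    fromBlocks_multiply, fromBlocks_multiply]
  rw [Matrix.fromBlocks_inj]
  refine ⟨?_, ?_, ?_, ?_⟩
  · simp only [Matrix.mul_one, Matrix.mul_zero, Matrix.zero_mul, Matrix.mul_neg,
      Matrix.neg_mul, zero_add, add_zero, conjTranspose_zero]
    rw [hVV, hBB]
    have hsc : (γ:ℂ)⁻¹ = s2⁻¹ + t / ((γ:ℂ) * s2) := by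
      have h1 : (γ:ℂ) + t ≠ 0 := hs2 ▸ hs20
      rw [hs2]
      field_simp
    rw [hsc, add_smul]
    abel
  · simp only [Matrix.mul_one, Matrix.mul_zero, Matrix.zero_mul, Matrix.mul_neg,
      Matrix.neg_mul, zero_add, add_zero, conjTranspose_zero, Matrix.mul_zero]
    rw [hSH, hBdef, Matrix.mul_assoc, hSiS, Matrix.mul_one]
  · simp only [Matrix.mul_one, Matrix.mul_zero, Matrix.zero_mul, Matrix.mul_neg,
      Matrix.neg_mul, zero_add, add_zero, conjTranspose_zero, Matrix.zero_mul]
    rw [hBH, ← Matrix.mul_assoc, hSSi, Matrix.one_mul]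
  · simp only [Matrix.mul_one, Matrix.mul_zero, Matrix.zero_mul, Matrix.mul_neg,
      Matrix.neg_mul, zero_add, add_zero, conjTranspose_zero]
    rw [hSH, hSS, hMdef, neg_add]
end
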